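/- Let φ be a 𝒯-good function and I ∈ 𝒯 with I ≠ X. Then I ∈ S_φ if and only if for every J ∈ 𝒯 properly containing I one has Av_J(φ) < Av_I(φ), where Av_I(φ) = (1/μ(I))∫_I φ dμ. -/

import Mathlib

open MeasureTheory Set Filter
open scoped ENNReal

/-- A tree `𝒯` on a probability space `(X, μ)` in the sense of Melas:
`X ∈ 𝒯`; every `I ∈ 𝒯` is measurable with `μ(I) > 0`; each `I ∈ 𝒯` has a finite or
countable family `C(I) ⊆ 𝒯` of at least two pairwise disjoint elements with union `I`;
`𝒯` is the union of its generations `𝒯_(m)`; and `sup_{I ∈ 𝒯_(m)} μ(I) → 0`. -/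
structure DyadicTree {X : Type*} [MeasurableSpace X] (μ : Measure X) where
  mem : Set (Set X)
  univ_mem : Set.univ ∈ mem
  meas : ∀ I ∈ mem, MeasurableSet I
  measure_pos : ∀ I ∈ mem, 0 < μ I
  C : Set X → Set (Set X)
  C_subset_mem : ∀ I ∈ mem, C I ⊆ mem
  C_countable : ∀ I ∈ mem, (C I).Countable
  C_nontrivial : ∀ I ∈ mem, ∃ J ∈ C I, ∃ K ∈ C I, J ≠ K
  C_disjoint : ∀ I ∈ mem, (C I).Pairwise Disjoint
  C_union : ∀ I ∈ mem, ⋃₀ C I = I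
  gen : ℕ → Set (Set X)
  gen_zero : gen 0 = {Set.univ}
  gen_succ : ∀ m, gen (m + 1) = ⋃ I ∈ gen m, C I
  mem_eq : mem = ⋃ m, gen m
  sup_measure_tendsto : Tendsto (fun m => ⨆ I ∈ gen m, μ I) atTop (nhds 0)

variable {X : Type*} [MeasurableSpace X]

/-- The average `Av_I(φ) = (1/μ(I)) ∫_I φ dμ`. -/
noncomputable def Av (μ : Measure X) (I : Set X) (φ : X → ℝ≥0∞) : ℝ≥0∞ :=
  (∫⁻ y in I, φ y ∂μ) / μ I

/-- The dyadic-like maximal operator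
`M_𝒯 φ(x) = sup { (1/μ(I)) ∫_I φ dμ : x ∈ I ∈ 𝒯 }`. -/
noncomputable def maxOp {μ : Measure X} (T : DyadicTree μ) (φ : X → ℝ≥0∞) (x : X) : ℝ≥0∞ :=
  ⨆ I ∈ T.mem, ⨆ _ : x ∈ I, Av μ I φ

variable {μ : Measure X}

/-- The exceptional set `𝒜_φ = {x : M_𝒯φ(x) > Av_I(φ) for all I ∈ 𝒯 with x ∈ I}`. -/
def badSet (T : DyadicTree μ) (φ : X → ℝ≥0∞) : Set X :=
  {x | ∀ I ∈ T.mem, x ∈ I → Av μ I φ < maxOp T φ x}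

/-- `φ` is `𝒯`-good if the set `𝒜_φ` has `μ`-measure zero. -/
def TGood (T : DyadicTree μ) (φ : X → ℝ≥0∞) : Prop :=
  μ (badSet T φ) = 0

/-- The set `A(φ, I) = {x ∈ X ∖ 𝒜_φ : I_φ(x) = I}`, where `I_φ(x)` is the largest
`I ∈ 𝒯` with `x ∈ I` and `M_𝒯φ(x) = Av_I(φ)`. -/
def ASet (T : DyadicTree μ) (φ : X → ℝ≥0∞) (I : Set X) : Set X :=
  {x | x ∉ badSet T φ ∧ x ∈ I ∧ maxOp T φ x = Av μ I φ ∧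
    ∀ J ∈ T.mem, x ∈ J → maxOp T φ x = Av μ J φ → J ⊆ I}

/-- The subtree `S_φ = {I ∈ 𝒯 : μ(A(φ,I)) > 0} ∪ {X}`. -/
def Sphi (T : DyadicTree μ) (φ : X → ℝ≥0∞) : Set (Set X) :=
  {I ∈ T.mem | 0 < μ (ASet T φ I)} ∪ {Set.univ}


section Aux

variable {μ : Measure X} (T : DyadicTree μ)

lemma gen_subset_mem (m : ℕ) : T.gen m ⊆ T.mem := by
  rw [T.mem_eq]; exact subset_iUnion T.gen m

lemma subset_of_mem_C {I J : Set X} (hI : I ∈ T.mem) (hJ : J ∈ T.C I) : J ⊆ I := by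
  rw [← T.C_union I hI]; exact subset_sUnion_of_mem hJ

lemma gen_pairwise (m : ℕ) : (T.gen m).Pairwise Disjoint := by
  induction m with
  | zero => rw [T.gen_zero]; exact Set.pairwise_singleton _ _
  | succ n ih =>
    rw [T.gen_succ]
    intro J1 h1 J2 h2 hne
    simp only [Set.mem_iUnion] at h1 h2
    obtain ⟨I1, hI1, hJ1⟩ := h1
    obtain ⟨I2, hI2, hJ2⟩ := h2
    by_cases hII : I1 = I2
    · subst hII
      exact T.C_disjoint I1 (gen_subset_mem T n hI1) hJ1 hJ2 hne
    · exact (ih hI1 hI2 hII).mono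
        (subset_of_mem_C T (gen_subset_mem T n hI1) hJ1)
        (subset_of_mem_C T (gen_subset_mem T n hI2) hJ2)

lemma exists_gen_mem (x : X) (m : ℕ) : ∃ I ∈ T.gen m, x ∈ I := by
  induction m with
  | zero => exact ⟨Set.univ, by rw [T.gen_zero]; rfl, trivial⟩
  | succ n ih =>
    obtain ⟨I, hI, hx⟩ := ih
    have hx' : x ∈ ⋃₀ T.C I := by
      rw [T.C_union I (gen_subset_mem T n hI)]; exact hx
    obtain ⟨J, hJ, hxJ⟩ := hx'
    refine ⟨J, ?_, hxJ⟩
    rw [T.gen_succ]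
    exact Set.mem_biUnion hI hJ

lemma exists_ancestor : ∀ n : ℕ, ∀ {m : ℕ}, m ≤ n → ∀ J ∈ T.gen n, ∃ I ∈ T.gen m, J ⊆ I := by
  intro n
  induction n with
  | zero =>
    intro m hm J hJ
    have : m = 0 := Nat.le_zero.mp hm
    subst this
    exact ⟨J, hJ, subset_rfl⟩
  | succ n ih =>
    intro m hm J hJ
    rcases Nat.lt_or_ge m (n + 1) with h | h
    · have hm' : m ≤ n := Nat.lt_succ_iff.mp h
      rw [T.gen_succ] at hJ
      simp only [Set.mem_iUnion] at hJ
      obtain ⟨I, hIg, hJC⟩ := hJ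
      obtain ⟨I', hI', hII'⟩ := ih hm' I hIg
      exact ⟨I', hI', (subset_of_mem_C T (gen_subset_mem T n hIg) hJC).trans hII'⟩
    · have : m = n + 1 := le_antisymm hm h
      subst this
      exact ⟨J, hJ, subset_rfl⟩

lemma mem_comparable {I J : Set X} (hI : I ∈ T.mem) (hJ : J ∈ T.mem) {x : X}
    (hxI : x ∈ I) (hxJ : x ∈ J) : I ⊆ J ∨ J ⊆ I := by
  have hI' := hI; have hJ' := hJ
  rw [T.mem_eq] at hI' hJ'
  simp only [Set.mem_iUnion] at hI' hJ'
  obtain ⟨m, hm⟩ := hI'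
  obtain ⟨n, hn⟩ := hJ'
  rcases le_total m n with h | h
  · right
    obtain ⟨I', hI'', hJI'⟩ := exists_ancestor T n h J hn
    have heq : I = I' := by
      by_contra hne
      exact Set.not_disjoint_iff.mpr ⟨x, hxI, hJI' hxJ⟩ (gen_pairwise T m hm hI'' hne)
    rw [heq]; exact hJI'
  · left
    obtain ⟨J', hJ'', hIJ'⟩ := exists_ancestor T m h I hm
    have heq : J = J' := by
      by_contra hne
      exact Set.not_disjoint_iff.mpr ⟨x, hxJ, hIJ' hxI⟩ (gen_pairwise T n hn hJ'' hne)
    rw [heq]; exact hIJ'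

open scoped Classical in
lemma exists_largest (Q : Set X → Prop) (x : X)
    (h : ∃ J ∈ T.mem, x ∈ J ∧ Q J) :
    ∃ J ∈ T.mem, x ∈ J ∧ Q J ∧ ∀ K ∈ T.mem, x ∈ K → Q K → K ⊆ J := by
  have hP : ∃ m, ∃ J ∈ T.gen m, x ∈ J ∧ Q J := by
    obtain ⟨J, hJ, hx, hQ⟩ := h
    rw [T.mem_eq] at hJ
    simp only [Set.mem_iUnion] at hJ
    obtain ⟨m, hm⟩ := hJ
    exact ⟨m, J, hm, hx, hQ⟩
  obtain ⟨J, hJg, hxJ, hQJ⟩ := Nat.find_spec hP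
  refine ⟨J, gen_subset_mem T _ hJg, hxJ, hQJ, ?_⟩
  intro K hK hxK hQK
  have hK' := hK
  rw [T.mem_eq] at hK'
  simp only [Set.mem_iUnion] at hK'
  obtain ⟨n, hn⟩ := hK'
  have hmn : Nat.find hP ≤ n := Nat.find_le ⟨K, hn, hxK, hQK⟩
  obtain ⟨I', hI', hKI'⟩ := exists_ancestor T n hmn K hn
  have heq : I' = J := by
    by_contra hne
    exact Set.not_disjoint_iff.mpr ⟨x, hKI' hxK, hxJ⟩ (gen_pairwise T _ hI' hJg hne)
  rw [← heq]; exact hKI'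

lemma gen_countable (m : ℕ) : (T.gen m).Countable := by
  induction m with
  | zero => rw [T.gen_zero]; exact Set.countable_singleton _
  | succ n ih =>
    rw [T.gen_succ]
    exact ih.biUnion fun I hI => T.C_countable I (gen_subset_mem T n hI)

lemma tree_mem_countable : T.mem.Countable := by
  rw [T.mem_eq]; exact Set.countable_iUnion (gen_countable T)

lemma Av_le_maxOp (φ : X → ℝ≥0∞) {I : Set X} (hI : I ∈ T.mem) {x : X} (hx : x ∈ I) :
    Av μ I φ ≤ maxOp T φ x :=
  le_iSup₂_of_le I hI (le_iSup_of_le hx le_rfl)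

lemma Av_mul_measure [IsFiniteMeasure μ] (φ : X → ℝ≥0∞) {I : Set X} (hI : I ∈ T.mem) :
    Av μ I φ * μ I = ∫⁻ y in I, φ y ∂μ :=
  ENNReal.div_mul_cancel (T.measure_pos I hI).ne' (measure_ne_top μ I)

lemma mul_measure_sUnion_le {μ : Measure X} {S : Set (Set X)} (hc : S.Countable)
    (hd : S.Pairwise Disjoint) (hm : ∀ J ∈ S, MeasurableSet J) {c : ℝ≥0∞} {φ : X → ℝ≥0∞}
    (h : ∀ J ∈ S, c * μ J ≤ ∫⁻ y in J, φ y ∂μ) :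
    c * μ (⋃₀ S) ≤ ∫⁻ y in ⋃₀ S, φ y ∂μ := by
  haveI := hc.to_subtype
  have hdis : Pairwise (Function.onFun Disjoint fun i : ↥S => (i : Set X)) := fun i j hij =>
    hd i.2 j.2 (Subtype.coe_injective.ne hij)
  rw [Set.sUnion_eq_iUnion,
    lintegral_iUnion (s := fun i : ↥S => (i : Set X)) (fun i => hm i i.2) hdis,
    measure_iUnion (f := fun i : ↥S => (i : Set X)) hdis (fun i => hm i i.2),
    ← ENNReal.tsum_mul_left]
  exact ENNReal.tsum_le_tsum fun i : ↥S => h i i.2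

end Aux

/-- Lemma 3.1: for `φ` a `𝒯`-good function and `I ∈ 𝒯` with `I ≠ X`, one has `I ∈ S_φ`
iff `Av_J(φ) < Av_I(φ)` for every `J ∈ 𝒯` properly containing `I`. -/
theorem mem_Sphi_iff (μ : Measure X) [IsProbabilityMeasure μ] [NullSingletonClass μ]
    (T : DyadicTree μ) (φ : X → ℝ≥0∞) (hφ : Measurable φ)
    (hint : ∫⁻ y, φ y ∂μ ≠ ∞) (hgood : TGood T φ)
    (I : Set X) (hI : I ∈ T.mem) (hIX : I ≠ Set.univ) :
    I ∈ Sphi T φ ↔ ∀ J ∈ T.mem, I ⊂ J → Av μ J φ < Av μ I φ := by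
  constructor
  · intro hS
    rcases hS with hS | hS
    · obtain ⟨hmem, hpos⟩ := hS
      obtain ⟨x, hxbad, hxI, hmax, hmaxl⟩ := nonempty_of_measure_ne_zero hpos.ne'
      intro J hJ hIJ
      have hxJ : x ∈ J := hIJ.subset hxI
      have h1 : Av μ J φ ≤ Av μ I φ := hmax ▸ Av_le_maxOp T φ hJ hxJ
      rcases h1.lt_or_eq with h | h
      · exact h
      · exact absurd (Set.Subset.antisymm hIJ.subset
          (hmaxl J hJ hxJ (hmax.trans h.symm))) hIJ.ne
    · exact absurd hS hIX
  · intro hAv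
    left
    refine ⟨hI, ?_⟩
    by_contra hpos
    rw [not_lt, nonpos_iff_eq_zero] at hpos
    set c := Av μ I φ with hc
    -- the family of maximal tree elements J ⊆ I with Av J > Av I
    set G : Set (Set X) := {J | J ∈ T.mem ∧ J ⊆ I ∧ c < Av μ J φ ∧
        ∀ K ∈ T.mem, K ⊆ I → c < Av μ K φ → J ⊆ K → K ⊆ J} with hGdef
    have hGmem : ∀ J ∈ G, J ∈ T.mem := fun J hJ => hJ.1
    have hGsub : ∀ J ∈ G, J ⊆ I := fun J hJ => hJ.2.1
    have hGcnt : G.Countable := (tree_mem_countable T).mono hGmem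
    have hGmeas : ∀ J ∈ G, MeasurableSet J := fun J hJ => T.meas J (hGmem J hJ)
    have hGdisj : G.Pairwise Disjoint := by
      intro J1 h1 J2 h2 hne
      by_contra hd
      obtain ⟨x, hx1, hx2⟩ := Set.not_disjoint_iff.mp hd
      rcases mem_comparable T h1.1 h2.1 hx1 hx2 with h | h
      · exact hne (Set.Subset.antisymm h (h1.2.2.2 J2 h2.1 h2.2.1 h2.2.2.1 h))
      · exact hne (Set.Subset.antisymm (h2.2.2.2 J1 h1.1 h1.2.1 h1.2.2.1 h) h)
    -- the cover: up to the bad set and A(φ,I), the set I is covered by ⋃₀ G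
    have cover : I ⊆ (badSet T φ ∪ ASet T φ I) ∪ ⋃₀ G := by
      intro x hx
      by_cases hb : x ∈ badSet T φ
      · exact Or.inl (Or.inl hb)
      have hex : ∃ J ∈ T.mem, x ∈ J ∧ Av μ J φ = maxOp T φ x := by
        simp only [badSet, Set.mem_setOf_eq, not_forall] at hb
        obtain ⟨J, hJ, hxJ, hlt⟩ := hb
        exact ⟨J, hJ, hxJ, le_antisymm (Av_le_maxOp T φ hJ hxJ) (not_lt.mp hlt)⟩
      obtain ⟨J, hJm, hxJ, hQJ, hmaxl⟩ :=
        exists_largest T (fun J => Av μ J φ = maxOp T φ x) x hex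
      by_cases hmI : maxOp T φ x = c
      · -- then I itself realizes the maximum, and J = I, so x ∈ A(φ, I)
        have hIJ' : I ⊆ J := hmaxl I hI hx hmI.symm
        have hJI : J = I := by
          by_contra hne
          have hss : I ⊂ J := ssubset_of_subset_of_ne hIJ' (Ne.symm hne)
          have hlt := hAv J hJm hss
          rw [hQJ, hmI] at hlt
          exact lt_irrefl _ hlt
        exact Or.inl (Or.inr ⟨hb, hx, hmI,
          fun K hK hxK hQK => hJI ▸ hmaxl K hK hxK hQK.symm⟩)
      · have hlt : c < maxOp T φ x :=
          lt_of_le_of_ne (Av_le_maxOp T φ hI hx) (Ne.symm hmI)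
        have hJsubI : J ⊆ I := by
          rcases mem_comparable T hJm hI hxJ hx with h | h
          · exact h
          · exfalso
            have hne : I ≠ J := by rintro rfl; exact hmI hQJ.symm
            have hlt2 := hAv J hJm (ssubset_of_subset_of_ne h hne)
            rw [hQJ] at hlt2
            exact absurd hlt2 (not_lt.mpr hlt.le)
        have hex2 : ∃ K ∈ T.mem, x ∈ K ∧ (K ⊆ I ∧ c < Av μ K φ) :=
          ⟨J, hJm, hxJ, hJsubI, by rw [hQJ]; exact hlt⟩
        obtain ⟨J', hJ'm, hxJ', ⟨hJ'I, hJ'Av⟩, hJ'max⟩ :=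
          exists_largest T (fun K => K ⊆ I ∧ c < Av μ K φ) x hex2
        exact Or.inr ⟨J', ⟨hJ'm, hJ'I, hJ'Av,
          fun K hK hKI hKAv hJ'K => hJ'max K hK (hJ'K hxJ') ⟨hKI, hKAv⟩⟩, hxJ'⟩
    have hN : μ (badSet T φ ∪ ASet T φ I) = 0 :=
      le_antisymm ((measure_union_le _ _).trans (by rw [hgood, hpos, zero_add])) (zero_le)
    -- basic finiteness facts
    have hintI : ∫⁻ y in I, φ y ∂μ ≠ ∞ :=
      ((setLIntegral_le_lintegral I φ).trans_lt hint.lt_top).ne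
    have hcne : c ≠ ∞ := (ENNReal.div_lt_top hintI (T.measure_pos I hI).ne').ne
    -- measure and integral comparisons with ⋃₀ G
    have hcoverμ : μ I ≤ μ (⋃₀ G) := by
      calc μ I ≤ μ ((badSet T φ ∪ ASet T φ I) ∪ ⋃₀ G) := measure_mono cover
        _ ≤ μ (badSet T φ ∪ ASet T φ I) + μ (⋃₀ G) := measure_union_le _ _
        _ = μ (⋃₀ G) := by rw [hN, zero_add]
    -- each member of G has strictly larger average
    have hGint : ∀ J ∈ G, c * μ J < ∫⁻ y in J, φ y ∂μ := by
      intro J hJ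
      rw [← Av_mul_measure T φ (hGmem J hJ)]
      rw [mul_comm c, mul_comm (Av μ J φ)]
      exact (ENNReal.mul_lt_mul_right (T.measure_pos J (hGmem J hJ)).ne'
        (measure_ne_top μ J)) hJ.2.2.1
    -- G is nonempty
    have hGne : (⋃₀ G).Nonempty := by
      rcases Set.eq_empty_or_nonempty (⋃₀ G) with h | h
      · exfalso
        have : μ I = 0 := le_antisymm (by rw [h, measure_empty] at hcoverμ; exact hcoverμ)
          (zero_le)
        exact (T.measure_pos I hI).ne' this
      · exact h
    obtain ⟨x0, J0, hJ0G, _⟩ := hGne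
    -- split ⋃₀ G into J0 and the rest
    set G' := G \ {J0} with hG'def
    have hGsplit : ⋃₀ G = J0 ∪ ⋃₀ G' := by
      rw [hG'def, ← Set.sUnion_insert, Set.insert_diff_singleton,
        Set.insert_eq_self.mpr hJ0G]
    have hG'meas : MeasurableSet (⋃₀ G') :=
      MeasurableSet.sUnion (hGcnt.mono Set.diff_subset) fun J hJ => hGmeas J hJ.1
    have hG'disj : Disjoint J0 (⋃₀ G') := by
      rw [Set.disjoint_sUnion_right]
      intro t ht
      exact hGdisj hJ0G ht.1 (Ne.symm ht.2)
    have hG'le : c * μ (⋃₀ G') ≤ ∫⁻ y in ⋃₀ G', φ y ∂μ :=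
      mul_measure_sUnion_le (hGcnt.mono Set.diff_subset)
        (hGdisj.mono Set.diff_subset) (fun J hJ => hGmeas J hJ.1)
        (fun J hJ => (hGint J hJ.1).le)
    have hG'ne : c * μ (⋃₀ G') ≠ ∞ := ENNReal.mul_ne_top hcne (measure_ne_top μ _)
    have key : c * μ I < ∫⁻ y in I, φ y ∂μ := by
      calc c * μ I ≤ c * μ (⋃₀ G) := mul_le_mul_right hcoverμ _
        _ = c * μ J0 + c * μ (⋃₀ G') := by
            rw [hGsplit, measure_union hG'disj hG'meas, mul_add]
        _ < ∫⁻ y in J0, φ y ∂μ + c * μ (⋃₀ G') :=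
            ENNReal.add_lt_add_right hG'ne (hGint J0 hJ0G)
        _ ≤ ∫⁻ y in J0, φ y ∂μ + ∫⁻ y in ⋃₀ G', φ y ∂μ := add_le_add_right hG'le _
        _ = ∫⁻ y in ⋃₀ G, φ y ∂μ := by rw [hGsplit, lintegral_union hG'meas hG'disj]
        _ ≤ ∫⁻ y in I, φ y ∂μ := lintegral_mono_set (Set.sUnion_subset hGsub)
    rw [Av_mul_measure T φ hI] at key
    exact lt_irrefl _ key
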